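/- arXiv:2605.05168 — 4 statements merged into one kernel-verified Lean document; each statement's English description precedes it below -/
import Mathlib

section
/- Let v, ṽ, w be vectors in a real inner product space with ‖v‖ = ‖ṽ‖ = r > 0 and ⟨w, ṽ⟩ = 0. Set c := ⟨v, ṽ⟩/r² (so |c| ≤ 1 by Cauchy–Schwarz). Then |⟨w, v⟩| / r ≤ ‖w‖ · √(1 − c²). In words: the norm of the orthogonal projection of w onto span(v) is at most ‖w‖ times the sine of the angle between v and ṽ, whenever w is orthogonal to ṽ. -/
open scoped RealInnerProductSpace

/-- Key geometric estimate behind Proposition 3: if `w` is orthogonal to `v'` and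
`‖v‖ = ‖v'‖ = r`, then the norm `|⟪w, v⟫|/r` of the orthogonal projection of `w`
onto `span(v)` is at most `‖w‖` times the sine `√(1 - c²)` of the angle between
`v` and `v'`, where `c = ⟪v, v'⟫ / r²`. -/
theorem proj_norm_le_sine
    {E : Type*} [NormedAddCommGroup E] [InnerProductSpace ℝ E]
    (v v' w : E) (r : ℝ) (hr : 0 < r)
    (hv : ‖v‖ = r) (hv' : ‖v'‖ = r)
    (hw : ⟪w, v'⟫ = 0) :
    |⟪w, v⟫| / r ≤ ‖w‖ * Real.sqrt (1 - (⟪v, v'⟫ / r ^ 2) ^ 2) := by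
  set c : ℝ := ⟪v, v'⟫ / r ^ 2 with hc
  set u : E := v - c • v' with hu
  have hr2 : (r : ℝ) ^ 2 ≠ 0 := by positivity
  have hvv' : ⟪v, v'⟫ = c * r ^ 2 := by rw [hc, div_mul_cancel₀ _ hr2]
  have hwv : ⟪w, v⟫ = ⟪w, u⟫ := by
    simp [hu, inner_sub_right, inner_smul_right, hw]
  have hun : ‖u‖ ^ 2 = r ^ 2 * (1 - c ^ 2) := by
    have := @norm_sub_sq_real E _ _ v (c • v')
    rw [inner_smul_right, norm_smul, hvv'] at this
    simp only [hu]
    rw [this, hv, hv']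
    have : |c| ^ 2 = c ^ 2 := sq_abs c
    simp [Real.norm_eq_abs, mul_pow, sq_abs]
    ring
  have h1c : 0 ≤ 1 - c ^ 2 := by
    have hr2p : 0 < r ^ 2 := by positivity
    nlinarith [hun, sq_nonneg ‖u‖]
  have hunorm : ‖u‖ = r * Real.sqrt (1 - c ^ 2) := by
    have : ‖u‖ = Real.sqrt (‖u‖ ^ 2) := (Real.sqrt_sq (norm_nonneg u)).symm
    rw [this, hun, Real.sqrt_mul (by positivity), Real.sqrt_sq hr.le]
  have hcs : |⟪w, u⟫| ≤ ‖w‖ * ‖u‖ := abs_real_inner_le_norm w u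
  rw [hwv, div_le_iff₀ hr]
  calc |⟪w, u⟫| ≤ ‖w‖ * ‖u‖ := hcs
    _ = ‖w‖ * Real.sqrt (1 - c ^ 2) * r := by rw [hunorm]; ring
end

section
/- Let L ≥ 1, let r_1,…,r_L > 0, and let (v_1,…,v_L) and (ṽ_1,…,ṽ_L) be two pairwise orthogonal families of vectors in a real inner product space with ‖v_j‖ = ‖ṽ_j‖ = r_j for all j. Fix ℓ ∈ {1,…,L} and suppose v_i = ṽ_i for all i < ℓ. Let c := ⟨v_ℓ, ṽ_ℓ⟩/r_ℓ² and let d > 0 satisfy |c − 1|·r_ℓ ≥ d (projective separation at layer ℓ). Then, writing o := ∑_{j=1}^L v_j and õ := ∑_{j=1}^L ṽ_j and Π_{v_ℓ} for the orthogonal projection onto span(v_ℓ), one has ‖Π_{v_ℓ} õ − Π_{v_ℓ} o‖ ≥ d − √(1 − c²) · √(∑_{j=ℓ+1}^L r_j²). -/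
open scoped RealInnerProductSpace

/-- Abstract form of Proposition 3: two multi-layer codewords `o = ∑ j, v j` and
`o' = ∑ j, v' j` built from pairwise orthogonal layer vectors of norms `r j`,
agreeing below layer `ℓ` and projectively `d`-separated at layer `ℓ`, have
projections onto `span(v ℓ)` separated by at least
`d - √(1 - c²) · √(∑_{j > ℓ} (r j)²)`, where `c = ⟪v ℓ, v' ℓ⟫ / (r ℓ)²`. -/
theorem layer_projection_separation
    {E : Type*} [NormedAddCommGroup E] [InnerProductSpace ℝ E]
    (L : ℕ) (hL : 1 ≤ L) (r : Fin L → ℝ) (hr : ∀ j, 0 < r j)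
    (v v' : Fin L → E)
    (hvorth : ∀ i j, i ≠ j → ⟪v i, v j⟫ = 0)
    (hv'orth : ∀ i j, i ≠ j → ⟪v' i, v' j⟫ = 0)
    (hvnorm : ∀ j, ‖v j‖ = r j) (hv'norm : ∀ j, ‖v' j‖ = r j)
    (ℓ : Fin L) (hagree : ∀ i, i < ℓ → v i = v' i)
    (d : ℝ) (hd : 0 < d)
    (hsep : d ≤ |⟪v ℓ, v' ℓ⟫ / (r ℓ) ^ 2 - 1| * r ℓ) :
    d - Real.sqrt (1 - (⟪v ℓ, v' ℓ⟫ / (r ℓ) ^ 2) ^ 2) *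
        Real.sqrt (∑ j ∈ Finset.univ.filter (fun j => ℓ < j), (r j) ^ 2)
      ≤ ‖(⟪∑ j, v' j, v ℓ⟫ / (r ℓ) ^ 2) • v ℓ -
          (⟪∑ j, v j, v ℓ⟫ / (r ℓ) ^ 2) • v ℓ‖ := by
  set c : ℝ := ⟪v ℓ, v' ℓ⟫ / (r ℓ) ^ 2 with hc
  have hrl := hr ℓ
  have hrl2 : (r ℓ) ^ 2 ≠ 0 := by positivity
  have hvv : ⟪v ℓ, v ℓ⟫ = (r ℓ) ^ 2 := by
    rw [real_inner_self_eq_norm_sq, hvnorm]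
  have hv'v' : ⟪v' ℓ, v' ℓ⟫ = (r ℓ) ^ 2 := by
    rw [real_inner_self_eq_norm_sq, hv'norm]
  have hvv' : ⟪v ℓ, v' ℓ⟫ = c * (r ℓ) ^ 2 := by
    rw [hc]; field_simp
  have h1 : ⟪∑ j, v j, v ℓ⟫ = (r ℓ) ^ 2 := by
    rw [sum_inner, Finset.sum_eq_single ℓ]
    · exact hvv
    · intro b _ hb; exact hvorth b ℓ hb
    · simp
  set s : Finset (Fin L) := Finset.univ.filter (fun j => ℓ < j) with hs
  set S : ℝ := ∑ j ∈ s, ⟪v' j, v ℓ⟫ with hS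
  have h2 : ⟪∑ j, v' j, v ℓ⟫ = c * (r ℓ) ^ 2 + S := by
    rw [sum_inner]
    have key : ∀ j : Fin L, ⟪v' j, v ℓ⟫ =
        (if j = ℓ then c * (r ℓ) ^ 2 else 0) + (if ℓ < j then ⟪v' j, v ℓ⟫ else 0) := by
      intro j
      rcases lt_trichotomy j ℓ with h | h | h
      · rw [← hagree j h, hvorth j ℓ h.ne]
        simp [h.ne, not_lt.2 h.le]
      · subst h
        rw [real_inner_comm, hvv']
        simp
      · simp [h, h.ne']
    rw [Finset.sum_congr rfl (fun j _ => key j), Finset.sum_add_distrib]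
    congr 1
    · simp
    · rw [hS, hs, Finset.sum_filter]
  set u : E := v ℓ - c • v' ℓ with hu
  have hcomm : ⟪v' ℓ, v ℓ⟫ = c * (r ℓ) ^ 2 := by
    rw [real_inner_comm]; exact hvv'
  have hu2 : ⟪u, u⟫ = (r ℓ) ^ 2 * (1 - c ^ 2) := by
    rw [hu]
    rw [inner_sub_left, inner_sub_right, inner_sub_right, real_inner_smul_left,
      real_inner_smul_left, real_inner_smul_right, real_inner_smul_right,
      hvv, hv'v', hvv', hcomm]
    ring
  have hunorm : ‖u‖ = r ℓ * Real.sqrt (1 - c ^ 2) := by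
    rw [norm_eq_sqrt_real_inner, hu2, Real.sqrt_mul (sq_nonneg _), Real.sqrt_sq hrl.le]
  set w : E := ∑ j ∈ s, v' j with hw
  have hw2 : ⟪w, w⟫ = ∑ j ∈ s, (r j) ^ 2 := by
    rw [hw, sum_inner]
    refine Finset.sum_congr rfl fun i hi => ?_
    rw [inner_sum, Finset.sum_eq_single i]
    · rw [real_inner_self_eq_norm_sq, hv'norm]
    · intro b _ hb; exact hv'orth i b (Ne.symm hb)
    · intro h; exact absurd hi h
  have hwnorm : ‖w‖ = Real.sqrt (∑ j ∈ s, (r j) ^ 2) := by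
    rw [norm_eq_sqrt_real_inner, hw2]
  have hSwu : S = ⟪w, u⟫ := by
    rw [hS, hw, sum_inner]
    refine Finset.sum_congr rfl fun j hj => ?_
    have hjℓ : j ≠ ℓ := (Finset.mem_filter.1 hj).2.ne'
    rw [hu, inner_sub_right, real_inner_smul_right, hv'orth j ℓ hjℓ]
    ring
  have hSbound : |S| ≤ r ℓ * (Real.sqrt (1 - c ^ 2) * Real.sqrt (∑ j ∈ s, (r j) ^ 2)) := by
    rw [hSwu]
    calc |⟪w, u⟫| ≤ ‖w‖ * ‖u‖ := abs_real_inner_le_norm w u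
      _ = r ℓ * (Real.sqrt (1 - c ^ 2) * Real.sqrt (∑ j ∈ s, (r j) ^ 2)) := by
          rw [hwnorm, hunorm]; ring
  have hnorm : ‖(⟪∑ j, v' j, v ℓ⟫ / (r ℓ) ^ 2) • v ℓ - (⟪∑ j, v j, v ℓ⟫ / (r ℓ) ^ 2) • v ℓ‖
      = |c - 1 + S / (r ℓ) ^ 2| * r ℓ := by
    rw [← sub_smul, norm_smul, hvnorm, Real.norm_eq_abs, h1, h2]
    congr 2
    field_simp
    ring
  rw [hnorm]
  have htri : |c - 1| ≤ |c - 1 + S / (r ℓ) ^ 2| + |S| / (r ℓ) ^ 2 := by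
    have habs : |S / (r ℓ) ^ 2| = |S| / (r ℓ) ^ 2 := by
      rw [abs_div, abs_of_pos (by positivity : (0:ℝ) < (r ℓ) ^ 2)]
    have h0 : |(c - 1) - (c - 1 + S / (r ℓ) ^ 2)| = |S / (r ℓ) ^ 2| := by
      rw [show (c - 1) - (c - 1 + S / (r ℓ) ^ 2) = -(S / (r ℓ) ^ 2) by ring, abs_neg]
    have h1' := abs_sub_abs_le_abs_sub (c - 1) (c - 1 + S / (r ℓ) ^ 2)
    rw [h0, habs] at h1'
    linarith
  have hsep' : d ≤ |c - 1| * r ℓ := hsep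
  have hdiv : |S| / r ℓ ≤ Real.sqrt (1 - c ^ 2) * Real.sqrt (∑ j ∈ s, (r j) ^ 2) := by
    rw [div_le_iff₀ hrl]
    calc |S| ≤ r ℓ * (Real.sqrt (1 - c ^ 2) * Real.sqrt (∑ j ∈ s, (r j) ^ 2)) := hSbound
      _ = Real.sqrt (1 - c ^ 2) * Real.sqrt (∑ j ∈ s, (r j) ^ 2) * r ℓ := by ring
  have key : |c - 1| * r ℓ ≤ |c - 1 + S / (r ℓ) ^ 2| * r ℓ + |S| / r ℓ := by
    have h3 : (|c - 1 + S / (r ℓ) ^ 2| + |S| / (r ℓ) ^ 2) * r ℓ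
        = |c - 1 + S / (r ℓ) ^ 2| * r ℓ + |S| / r ℓ := by
      field_simp
    nlinarith [mul_le_mul_of_nonneg_right htri hrl.le]
  linarith
end

section
/- Let A > 0, n ≥ 1, and let x = (x_1,…,x_n) ∈ [0,A]^n. Let Y_1,…,Y_n be independent random variables with Y_i Poisson-distributed with rate x_i, and set Z_i := Y_i − x_i. Then for every vector e ∈ ℝ^n with ∑_{i=1}^n e_i² = 1 and every t > 0, one has P( |∑_{i=1}^n e_i Z_i| > t ) ≤ 2·exp( −(3/2)·t + (9/4)·A ). -/
open MeasureTheory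

/-- The Poisson measure with rate `x`, viewed as a measure on ℝ supported on the
natural numbers: mass `e^{-x} x^k / k!` at each `k ∈ ℕ`. -/
noncomputable def poissonMeasureReal (x : ℝ) : Measure ℝ :=
  Measure.sum fun k : ℕ =>
    ENNReal.ofReal (Real.exp (-x) * x ^ k / (Nat.factorial k)) • Measure.dirac (k : ℝ)

open scoped ENNReal NNReal

namespace PoissonAux

lemma exp_eq_tsum (z : ℝ) : Real.exp z = ∑' n : ℕ, z ^ n / n.factorial := by
  rw [Real.exp_eq_exp_ℝ, NormedSpace.exp_eq_tsum_div]

lemma exp_tail (z : ℝ) :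
    Real.exp z = 1 + z + ∑' n : ℕ, z ^ (n + 2) / (n + 2).factorial := by
  have hz := Real.summable_pow_div_factorial z
  have h := Summable.sum_add_tsum_nat_add (f := fun n : ℕ => z ^ n / n.factorial) 2 hz
  rw [exp_eq_tsum, ← h]
  simp [Finset.sum_range_succ]

lemma exp_three_half_le : Real.exp (3 / 2 : ℝ) ≤ 19 / 4 := by
  have h1 : Real.exp 1 ≤ 2.7182818286 := Real.exp_one_lt_d9.le
  have h3 : Real.exp 3 ≤ 22.5625 := by
    have : Real.exp 3 = Real.exp 1 * Real.exp 1 * Real.exp 1 := by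
      rw [← Real.exp_add, ← Real.exp_add]; norm_num
    nlinarith [Real.exp_pos 1]
  have hsq : Real.exp (3 / 2 : ℝ) * Real.exp (3 / 2 : ℝ) = Real.exp 3 := by
    rw [← Real.exp_add]; norm_num
  nlinarith [Real.exp_pos (3 / 2 : ℝ)]

lemma exp_bound {s : ℝ} (hs : |s| ≤ 3 / 2) : Real.exp s ≤ 1 + s + s ^ 2 := by
  have habs : ∀ n : ℕ, s ^ (n + 2) / (n + 2).factorial
      ≤ s ^ 2 * ((3 / 2 : ℝ) ^ n / (n + 2).factorial) := by
    intro n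
    have hfac : (0 : ℝ) < (n + 2).factorial := by positivity
    rw [mul_div_assoc']
    rw [div_le_div_iff_of_pos_right hfac]

    calc s ^ (n + 2) ≤ |s ^ (n + 2)| := le_abs_self _
      _ = |s| ^ 2 * |s| ^ n := by rw [abs_pow]; ring
      _ ≤ |s| ^ 2 * (3 / 2 : ℝ) ^ n := by
          gcongr
      _ = s ^ 2 * (3 / 2 : ℝ) ^ n := by rw [sq_abs]
  have hsum32 : Summable (fun n : ℕ => (3 / 2 : ℝ) ^ n / (n + 2).factorial) := by
    have h := (summable_nat_add_iff 2).mpr (Real.summable_pow_div_factorial (3 / 2))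
    apply Summable.of_nonneg_of_le (fun n => by positivity) (fun n => ?_) (h.mul_left (4 / 9))
    have hfac : (0 : ℝ) < (n + 2).factorial := by positivity
    have hxx : (4 / 9 : ℝ) * ((3 / 2) ^ (n + 2) / (n + 2).factorial)
        = (3 / 2) ^ n / (n + 2).factorial := by
      rw [mul_div_assoc']
      congr 1
      ring
    rw [hxx]
  have hsumL : Summable (fun n : ℕ => s ^ (n + 2) / (n + 2).factorial) :=
    (summable_nat_add_iff 2).mpr (Real.summable_pow_div_factorial s)
  have htsum_le : ∑' n : ℕ, s ^ (n + 2) / (n + 2).factorial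
      ≤ s ^ 2 * ∑' n : ℕ, (3 / 2 : ℝ) ^ n / (n + 2).factorial := by
    rw [← tsum_mul_left]
    exact Summable.tsum_le_tsum habs hsumL (hsum32.mul_left _)
  have hconst : ∑' n : ℕ, (3 / 2 : ℝ) ^ n / (n + 2).factorial ≤ 1 := by
    have h32 : ∑' n : ℕ, ((3 / 2 : ℝ)) ^ (n + 2) / (n + 2).factorial
        = Real.exp (3 / 2) - 1 - 3 / 2 := by
      have := exp_tail (3 / 2 : ℝ); linarith
    have heq : ∀ n : ℕ, (3 / 2 : ℝ) ^ n / (n + 2).factorial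
        = (4 / 9) * ((3 / 2 : ℝ) ^ (n + 2) / (n + 2).factorial) := by
      intro n
      have : (3 / 2 : ℝ) ^ (n + 2) = (9 / 4) * (3 / 2) ^ n := by ring
      rw [this]; ring
    calc ∑' n : ℕ, (3 / 2 : ℝ) ^ n / (n + 2).factorial
        = (4 / 9) * ∑' n : ℕ, ((3 / 2 : ℝ)) ^ (n + 2) / (n + 2).factorial := by
          rw [← tsum_mul_left]; exact tsum_congr heq
      _ = (4 / 9) * (Real.exp (3 / 2) - 1 - 3 / 2) := by rw [h32]
      _ ≤ 1 := by nlinarith [exp_three_half_le]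
  have h2 : (0:ℝ) ≤ s ^ 2 := sq_nonneg s
  have := exp_tail s
  nlinarith [htsum_le, hconst]

end PoissonAux

namespace PoissonAux

lemma poisson_lintegral (x : ℝ) (hx : 0 ≤ x) (c b : ℝ) :
    ∫⁻ z, ENNReal.ofReal (Real.exp (c * (z - b))) ∂poissonMeasureReal x
      = ENNReal.ofReal (Real.exp (x * Real.exp c - x - c * b)) := by
  rw [poissonMeasureReal, lintegral_sum_measure]
  simp_rw [lintegral_smul_measure, lintegral_dirac]
  have hterm : ∀ k : ℕ,
      ENNReal.ofReal (Real.exp (-x) * x ^ k / k.factorial)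
        * ENNReal.ofReal (Real.exp (c * ((k : ℝ) - b)))
      = ENNReal.ofReal (Real.exp (-x - c * b) * ((x * Real.exp c) ^ k / k.factorial)) := by
    intro k
    rw [← ENNReal.ofReal_mul (by positivity)]
    congr 1
    have h1 : Real.exp (c * ((k : ℝ) - b)) = Real.exp c ^ k * Real.exp (-(c * b)) := by
      rw [← Real.exp_nat_mul, ← Real.exp_add]
      congr 1
      ring
    have h2 : Real.exp (-x - c * b) = Real.exp (-x) * Real.exp (-(c * b)) := by
      rw [← Real.exp_add, sub_eq_add_neg]
    rw [h1, h2, mul_pow]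
    ring
  simp_rw [smul_eq_mul, hterm]
  rw [← ENNReal.ofReal_tsum_of_nonneg (fun k => by positivity)
      ((Real.summable_pow_div_factorial (x * Real.exp c)).mul_left _)]
  congr 1
  rw [tsum_mul_left, ← exp_eq_tsum, ← Real.exp_add]
  congr 1
  ring

lemma poisson_prob (x : ℝ) (hx : 0 ≤ x) :
    IsProbabilityMeasure (poissonMeasureReal x) := by
  constructor
  have h := poisson_lintegral x hx 0 0
  simpa using h

lemma lintegral_pi_prod :
    ∀ {n : ℕ} (μ : Fin n → Measure ℝ) [∀ i, IsProbabilityMeasure (μ i)]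
      (f : Fin n → ℝ → ℝ≥0∞), (∀ i, Measurable (f i)) →
      ∫⁻ y, ∏ i, f i (y i) ∂Measure.pi μ = ∏ i, ∫⁻ z, f i z ∂μ i := by
  intro n
  induction n with
  | zero =>
    intro μ _ f hf
    simp
  | succ n ih =>
    intro μ _ f hf
    haveI : ∀ i, SigmaFinite (μ i) := fun i => inferInstance
    have hmp := measurePreserving_piFinSuccAbove μ 0
    set g : ℝ × (Fin n → ℝ) → ℝ≥0∞ :=
      fun p => f 0 p.1 * ∏ j, f ((0 : Fin (n+1)).succAbove j) (p.2 j) with hg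
    have hgmeas : Measurable g := by
      apply Measurable.mul
      · exact (hf 0).comp measurable_fst
      · exact Finset.measurable_prod _ fun j _ =>
          (hf _).comp ((measurable_pi_apply j).comp measurable_snd)
    have hkey : ∀ y : Fin (n+1) → ℝ,
        g (MeasurableEquiv.piFinSuccAbove (fun _ => ℝ) 0 y) = ∏ i, f i (y i) := by
      intro y
      rw [Fin.prod_univ_succAbove (fun i => f i (y i)) 0]
      rfl
    calc ∫⁻ y, ∏ i, f i (y i) ∂Measure.pi μ
        = ∫⁻ y, g (MeasurableEquiv.piFinSuccAbove (fun _ => ℝ) 0 y) ∂Measure.pi μ := by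
          refine lintegral_congr fun y => (hkey y).symm
      _ = ∫⁻ p, g p ∂(μ 0).prod (Measure.pi fun j => μ ((0 : Fin (n+1)).succAbove j)) :=
          hmp.lintegral_comp hgmeas
      _ = (∫⁻ z, f 0 z ∂μ 0)
            * ∫⁻ b, ∏ j, f ((0 : Fin (n+1)).succAbove j) (b j)
              ∂Measure.pi (fun j => μ ((0 : Fin (n+1)).succAbove j)) := by
          exact lintegral_prod_mul (hf 0).aemeasurable
            (Finset.measurable_prod _ fun j _ =>
              (hf _).comp (measurable_pi_apply j)).aemeasurable
      _ = (∫⁻ z, f 0 z ∂μ 0)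
            * ∏ j, ∫⁻ z, f ((0 : Fin (n+1)).succAbove j) z ∂μ ((0 : Fin (n+1)).succAbove j) := by
          rw [ih _ _ (fun j => hf _)]
      _ = ∏ i, ∫⁻ z, f i z ∂μ i :=
          (Fin.prod_univ_succAbove (fun i => ∫⁻ z, f i z ∂μ i) 0).symm

end PoissonAux

namespace PoissonAux

lemma one_sided (A : ℝ) (hA : 0 < A) (n : ℕ) (x : Fin n → ℝ)
    (hx : ∀ i, x i ∈ Set.Icc (0:ℝ) A)
    (e : Fin n → ℝ) (he : ∑ i, (e i) ^ 2 = 1) (t : ℝ) :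
    Measure.pi (fun i => poissonMeasureReal (x i))
        {y : Fin n → ℝ | t < ∑ i, e i * (y i - x i)}
      ≤ ENNReal.ofReal (Real.exp (-(3/2) * t + (9/4) * A)) := by
  haveI : ∀ i, IsProbabilityMeasure (poissonMeasureReal (x i)) :=
    fun i => poisson_prob _ (hx i).1
  set μ := Measure.pi fun i => poissonMeasureReal (x i) with hμ
  have hmeas_sum : Measurable fun y : Fin n → ℝ => ∑ i, e i * (y i - x i) :=
    Finset.measurable_sum _ fun i _ =>
      measurable_const.mul ((measurable_pi_apply i).sub measurable_const)
  have hS : MeasurableSet {y : Fin n → ℝ | t < ∑ i, e i * (y i - x i)} :=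
    measurableSet_lt measurable_const hmeas_sum
  have hgmeas : Measurable fun y : Fin n → ℝ =>
      ∏ i, ENNReal.ofReal (Real.exp ((3/2) * e i * (y i - x i))) :=
    Finset.measurable_prod _ fun i _ =>
      ENNReal.measurable_ofReal.comp (Real.measurable_exp.comp
        (measurable_const.mul ((measurable_pi_apply i).sub measurable_const)))
  have habs : ∀ i, |e i| ≤ 1 := by
    intro i
    have h1 : e i ^ 2 ≤ 1 := by
      rw [← he]
      exact Finset.single_le_sum (fun j _ => sq_nonneg (e j)) (Finset.mem_univ i)
    exact (sq_le_one_iff_abs_le_one (e i)).mp h1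
  have step1 : μ {y : Fin n → ℝ | t < ∑ i, e i * (y i - x i)}
      ≤ ENNReal.ofReal (Real.exp (-(3/2) * t))
        * ∫⁻ y, ∏ i, ENNReal.ofReal (Real.exp ((3/2) * e i * (y i - x i))) ∂μ := by
    rw [← lintegral_indicator_one hS, ← lintegral_const_mul _ hgmeas]
    refine lintegral_mono fun y => ?_
    by_cases hy : y ∈ {y : Fin n → ℝ | t < ∑ i, e i * (y i - x i)}
    · rw [Set.indicator_of_mem hy]
      have hprod : ∏ i, ENNReal.ofReal (Real.exp ((3/2) * e i * (y i - x i)))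
          = ENNReal.ofReal (Real.exp (∑ i, (3/2) * e i * (y i - x i))) := by
        rw [Real.exp_sum, ENNReal.ofReal_prod_of_nonneg (fun i _ => (Real.exp_pos _).le)]
      rw [hprod, ← ENNReal.ofReal_mul (Real.exp_pos _).le, ← Real.exp_add]
      refine ENNReal.one_le_ofReal.mpr (Real.one_le_exp ?_)
      have hyy : t < ∑ i, e i * (y i - x i) := hy
      have hsum : ∑ i, (3/2 : ℝ) * e i * (y i - x i)
          = (3/2) * ∑ i, e i * (y i - x i) := by
        rw [Finset.mul_sum]
        exact Finset.sum_congr rfl fun i _ => by ring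
      rw [hsum]
      linarith
    · rw [Set.indicator_of_notMem hy]
      exact zero_le
  have step2 : ∫⁻ y, ∏ i, ENNReal.ofReal (Real.exp ((3/2) * e i * (y i - x i))) ∂μ
      = ∏ i, ENNReal.ofReal
          (Real.exp (x i * Real.exp ((3/2) * e i) - x i - (3/2) * e i * (x i))) := by
    have hmeasf : ∀ i : Fin n,
        Measurable fun z : ℝ => ENNReal.ofReal (Real.exp ((3/2) * e i * (z - x i))) :=
      fun i => ENNReal.measurable_ofReal.comp (Real.measurable_exp.comp
        ((measurable_id.sub measurable_const).const_mul _))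
    rw [hμ]
    exact (lintegral_pi_prod (fun i => poissonMeasureReal (x i))
        (fun i z => ENNReal.ofReal (Real.exp ((3/2) * e i * (z - x i)))) hmeasf).trans
      (Finset.prod_congr rfl fun i _ => poisson_lintegral (x i) (hx i).1 ((3/2) * e i) (x i))
  have step4 : ∏ i, ENNReal.ofReal
        (Real.exp (x i * Real.exp ((3/2) * e i) - x i - (3/2) * e i * (x i)))
      ≤ ENNReal.ofReal (Real.exp ((9/4) * A)) := by
    rw [← ENNReal.ofReal_prod_of_nonneg (fun i _ => (Real.exp_pos _).le), ← Real.exp_sum]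
    refine ENNReal.ofReal_le_ofReal (Real.exp_le_exp.mpr ?_)
    have key : ∀ i, x i * Real.exp ((3/2) * e i) - x i - (3/2) * e i * (x i)
        ≤ (9/4) * A * e i ^ 2 := by
      intro i
      set c := (3/2 : ℝ) * e i with hc
      have hb : |c| ≤ 3/2 := by
        rw [hc, abs_mul]
        calc |(3/2 : ℝ)| * |e i| ≤ |(3/2 : ℝ)| * 1 := by
              gcongr
              exact habs i
          _ = 3/2 := by norm_num
      have hE := exp_bound hb
      have h0 : 0 ≤ Real.exp c - 1 - c := by
        nlinarith [Real.add_one_le_exp c]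
      have h1 : x i * (Real.exp c - 1 - c) ≤ A * (Real.exp c - 1 - c) :=
        mul_le_mul_of_nonneg_right (hx i).2 h0
      have h2 : A * (Real.exp c - 1 - c) ≤ A * c ^ 2 :=
        mul_le_mul_of_nonneg_left (by nlinarith) hA.le
      have h3 : A * c ^ 2 = 9/4 * A * e i ^ 2 := by rw [hc]; ring
      nlinarith
    calc ∑ i, (x i * Real.exp ((3/2) * e i) - x i - (3/2) * e i * (x i))
        ≤ ∑ i, (9/4) * A * e i ^ 2 := Finset.sum_le_sum fun i _ => key i
      _ = (9/4) * A := by rw [← Finset.mul_sum, he, mul_one]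
  calc μ {y : Fin n → ℝ | t < ∑ i, e i * (y i - x i)}
      ≤ ENNReal.ofReal (Real.exp (-(3/2) * t))
        * ∏ i, ENNReal.ofReal
            (Real.exp (x i * Real.exp ((3/2) * e i) - x i - (3/2) * e i * (x i))) := by
        rw [← step2]; exact step1
    _ ≤ ENNReal.ofReal (Real.exp (-(3/2) * t)) * ENNReal.ofReal (Real.exp ((9/4) * A)) :=
        mul_le_mul_right step4 _
    _ = ENNReal.ofReal (Real.exp (-(3/2) * t + (9/4) * A)) := by
        rw [← ENNReal.ofReal_mul (Real.exp_pos _).le, ← Real.exp_add]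

end PoissonAux

/-- Proposition 5: under the peak power constraint `x i ∈ [0, A]`, the projection of
the centred Poisson noise onto any unit direction exceeds `t` in absolute value with
probability at most `2 exp(-(3/2) t + (9/4) A)`. -/
theorem poisson_noise_projection_concentration
    (A : ℝ) (hA : 0 < A) (n : ℕ) (hn : 1 ≤ n)
    (x : Fin n → ℝ) (hx : ∀ i, x i ∈ Set.Icc (0:ℝ) A)
    (e : Fin n → ℝ) (he : ∑ i, (e i) ^ 2 = 1)
    (t : ℝ) (ht : 0 < t) :
    Measure.pi (fun i => poissonMeasureReal (x i))
        {y : Fin n → ℝ | t < |∑ i, e i * (y i - x i)|}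
      ≤ ENNReal.ofReal (2 * Real.exp (-(3/2) * t + (9/4) * A)) := by
  classical
  set μ := Measure.pi fun i => poissonMeasureReal (x i) with hμ
  have he' : ∑ i, (-e i) ^ 2 = 1 := by simpa using he
  have hsub : {y : Fin n → ℝ | t < |∑ i, e i * (y i - x i)|}
      ⊆ {y : Fin n → ℝ | t < ∑ i, e i * (y i - x i)}
        ∪ {y : Fin n → ℝ | t < ∑ i, (fun i => -e i) i * (y i - x i)} := by
    intro y hy
    have hy' : t < |∑ i, e i * (y i - x i)| := hy
    rcases lt_abs.mp hy' with h | h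
    · exact Or.inl h
    · refine Or.inr ?_
      have : ∑ i, (fun i => -e i) i * (y i - x i) = -∑ i, e i * (y i - x i) := by
        rw [← Finset.sum_neg_distrib]
        exact Finset.sum_congr rfl fun i _ => by ring
      simpa [this] using h
  calc μ {y : Fin n → ℝ | t < |∑ i, e i * (y i - x i)|}
      ≤ μ ({y : Fin n → ℝ | t < ∑ i, e i * (y i - x i)}
          ∪ {y : Fin n → ℝ | t < ∑ i, (fun i => -e i) i * (y i - x i)}) := measure_mono hsub
    _ ≤ μ {y : Fin n → ℝ | t < ∑ i, e i * (y i - x i)}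
          + μ {y : Fin n → ℝ | t < ∑ i, (fun i => -e i) i * (y i - x i)} :=
        measure_union_le _ _
    _ ≤ ENNReal.ofReal (Real.exp (-(3/2) * t + (9/4) * A))
          + ENNReal.ofReal (Real.exp (-(3/2) * t + (9/4) * A)) :=
        add_le_add (PoissonAux.one_sided A hA n x hx e he t)
          (PoissonAux.one_sided A hA n x hx (fun i => -e i) he' t)
    _ = ENNReal.ofReal (2 * Real.exp (-(3/2) * t + (9/4) * A)) := by
        rw [← ENNReal.ofReal_add (Real.exp_pos _).le (Real.exp_pos _).le]
        congr 1
        ring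
end

section
/- Let A > 0, n ≥ 1, x ∈ [0,A]^n, and let Y_1,…,Y_n be independent Poisson random variables with rates x_1,…,x_n. Let u ∈ ℝ^n satisfy ∑_{i=1}^n u_i² = 1 (hence |u_i| ≤ 1 for all i), and let 0 < μ ≤ 3/2. Then E[ exp( μ·∑_{i=1}^n u_i (Y_i − x_i) ) ] ≤ exp( μ²·A ). -/
open MeasureTheory

lemma poisson_hasSum_exp (x t c : ℝ) :
    HasSum (fun k : ℕ => Real.exp (-x) * x ^ k / (Nat.factorial k)
        * Real.exp (t * ((k : ℝ) - c)))
      (Real.exp (x * (Real.exp t - 1) - t * c)) := by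
  have h : HasSum (fun k : ℕ => (x * Real.exp t) ^ k / (Nat.factorial k))
      (Real.exp (x * Real.exp t)) := by
    rw [Real.exp_eq_exp_ℝ]
    exact NormedSpace.expSeries_div_hasSum_exp _
  have h2 := h.mul_left (Real.exp (-x - t * c))
  have e1 : ∀ k : ℕ, Real.exp (-x) * x ^ k / (Nat.factorial k)
      * Real.exp (t * ((k : ℝ) - c))
      = Real.exp (-x - t * c) * ((x * Real.exp t) ^ k / (Nat.factorial k)) := by
    intro k
    have hk : Real.exp (t * ((k : ℝ) - c)) = Real.exp t ^ k * Real.exp (-(t * c)) := by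
      rw [← Real.exp_nat_mul, ← Real.exp_add]
      congr 1; ring
    have hx2 : Real.exp (-x - t * c) = Real.exp (-x) * Real.exp (-(t * c)) := by
      rw [sub_eq_add_neg, Real.exp_add]
    rw [hk, hx2, mul_pow]; ring
  have e2 : Real.exp (-x - t * c) * Real.exp (x * Real.exp t)
      = Real.exp (x * (Real.exp t - 1) - t * c) := by
    rw [← Real.exp_add]; congr 1; ring
  rw [← e2]
  simp only [e1]
  exact h2

lemma poisson_isProbabilityMeasure {x : ℝ} (hx : 0 ≤ x) :
    IsProbabilityMeasure (poissonMeasureReal x) := by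
  constructor
  rw [poissonMeasureReal, Measure.sum_apply _ MeasurableSet.univ]
  simp only [Measure.smul_apply, Measure.dirac_apply_of_mem (Set.mem_univ _), smul_eq_mul,
    mul_one]
  have h1 : HasSum (fun k : ℕ => Real.exp (-x) * x ^ k / (Nat.factorial k)) 1 := by
    have := poisson_hasSum_exp x 0 0
    simpa using this
  have hnn : ∀ k : ℕ, 0 ≤ Real.exp (-x) * x ^ k / (Nat.factorial k) := fun k => by positivity
  rw [← ENNReal.ofReal_tsum_of_nonneg hnn h1.summable, h1.tsum_eq, ENNReal.ofReal_one]

lemma poisson_integral_exp (x : ℝ) (hx : 0 ≤ x) (t c : ℝ) :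
    ∫ y, Real.exp (t * (y - c)) ∂(poissonMeasureReal x)
      = Real.exp (x * (Real.exp t - 1) - t * c) := by
  have hm : Measurable fun y : ℝ => Real.exp (t * (y - c)) := by fun_prop
  rw [integral_eq_lintegral_of_nonneg_ae
      (Filter.Eventually.of_forall fun y => (Real.exp_pos _).le) hm.aestronglyMeasurable]
  rw [poissonMeasureReal, lintegral_sum_measure]
  simp_rw [lintegral_smul_measure, lintegral_dirac, smul_eq_mul]
  have hsum := poisson_hasSum_exp x t c
  have hnn : ∀ k : ℕ, 0 ≤ Real.exp (-x) * x ^ k / (Nat.factorial k) := fun k => by positivity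
  have heq : ∀ k : ℕ,
      ENNReal.ofReal (Real.exp (-x) * x ^ k / (Nat.factorial k))
        * ENNReal.ofReal (Real.exp (t * ((k : ℝ) - c)))
      = ENNReal.ofReal (Real.exp (-x) * x ^ k / (Nat.factorial k)
          * Real.exp (t * ((k : ℝ) - c))) := fun k =>
    (ENNReal.ofReal_mul (hnn k)).symm
  simp_rw [heq]
  rw [← ENNReal.ofReal_tsum_of_nonneg
      (fun k => mul_nonneg (hnn k) (Real.exp_pos _).le) hsum.summable, hsum.tsum_eq,
    ENNReal.toReal_ofReal (Real.exp_pos _).le]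

lemma two_mul_three_pow_le_factorial (n : ℕ) : 2 * 3 ^ n ≤ Nat.factorial (n + 2) := by
  induction n with
  | zero => simp [Nat.factorial]
  | succ n ih =>
      have h3 : 3 ≤ n + 3 := by omega
      calc 2 * 3 ^ (n + 1) = 3 * (2 * 3 ^ n) := by ring
        _ ≤ 3 * Nat.factorial (n + 2) := by exact Nat.mul_le_mul_left _ ih
        _ ≤ (n + 3) * Nat.factorial (n + 2) := Nat.mul_le_mul_right _ h3
        _ = Nat.factorial (n + 3) := rfl

lemma exp_sub_one_sub_le {s : ℝ} (hs : |s| ≤ 3 / 2) : Real.exp s - 1 - s ≤ s ^ 2 := by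
  have hexp : HasSum (fun n : ℕ => s ^ n / (Nat.factorial n)) (Real.exp s) := by
    rw [Real.exp_eq_exp_ℝ]
    exact NormedSpace.expSeries_div_hasSum_exp s
  have h2 : HasSum (fun n : ℕ => s ^ (n + 2) / (Nat.factorial (n + 2)))
      (Real.exp s - ∑ i ∈ Finset.range 2, s ^ i / (Nat.factorial i)) :=
    (hasSum_nat_add_iff' 2).mpr hexp
  have hr0 : 0 ≤ |s| / 3 := by positivity
  have hr1 : |s| / 3 < 1 := by
    have := abs_nonneg s; linarith
  have hgeo : Summable fun n : ℕ => (|s| / 3) ^ n := summable_geometric_of_lt_one hr0 hr1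
  have hmaj : Summable fun n : ℕ => s ^ 2 / 2 * (|s| / 3) ^ n := hgeo.mul_left _
  have hle : ∀ n : ℕ, s ^ (n + 2) / (Nat.factorial (n + 2)) ≤ s ^ 2 / 2 * (|s| / 3) ^ n := by
    intro n
    have hfac : (2 * 3 ^ n : ℝ) ≤ (Nat.factorial (n + 2) : ℝ) := by
      exact_mod_cast two_mul_three_pow_le_factorial n
    have habs : s ^ (n + 2) ≤ |s| ^ (n + 2) := by
      calc s ^ (n + 2) ≤ |s ^ (n + 2)| := le_abs_self _
        _ = |s| ^ (n + 2) := abs_pow s (n + 2)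
    have hpos : (0 : ℝ) < 2 * 3 ^ n := by positivity
    have step1 : s ^ (n + 2) / (Nat.factorial (n + 2)) ≤ |s| ^ (n + 2) / (2 * 3 ^ n) :=
      div_le_div₀ (by positivity) habs hpos hfac
    have step2 : |s| ^ (n + 2) / (2 * 3 ^ n) = s ^ 2 / 2 * (|s| / 3) ^ n := by
      rw [pow_add, sq_abs, div_pow]
      field_simp
    linarith [step2 ▸ step1]
  have htsum_le : (Real.exp s - ∑ i ∈ Finset.range 2, s ^ i / (Nat.factorial i))
      ≤ ∑' n : ℕ, s ^ 2 / 2 * (|s| / 3) ^ n := by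
    rw [← h2.tsum_eq]
    exact Summable.tsum_le_tsum hle h2.summable hmaj
  have hgval : ∑' n : ℕ, s ^ 2 / 2 * (|s| / 3) ^ n = s ^ 2 / 2 * (1 - |s| / 3)⁻¹ := by
    rw [tsum_mul_left, tsum_geometric_of_lt_one hr0 hr1]
  have hinv : (1 - |s| / 3)⁻¹ ≤ 2 := by
    rw [inv_le_comm₀ (by linarith) (by norm_num)]
    linarith
  have hfin : s ^ 2 / 2 * (1 - |s| / 3)⁻¹ ≤ s ^ 2 := by
    have := mul_le_mul_of_nonneg_left hinv (by positivity : (0 : ℝ) ≤ s ^ 2 / 2)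
    linarith
  have hsum2 : (∑ i ∈ Finset.range 2, s ^ i / (Nat.factorial i)) = 1 + s := by
    simp [Finset.sum_range_succ, Nat.factorial]
  rw [hsum2] at htsum_le
  rw [hgval] at htsum_le
  linarith

/-- Equations (41)–(43): moment generating function bound for the projected centred
Poisson noise: `E[exp(μ ∑ i, u i (Y i - x i))] ≤ exp(μ² A)` for `0 < μ ≤ 3/2`,
rates `x i ∈ [0, A]` and a unit vector `u`. -/
theorem poisson_projected_mgf_bound
    (A : ℝ) (hA : 0 < A) (n : ℕ) (hn : 1 ≤ n)
    (x : Fin n → ℝ) (hx : ∀ i, x i ∈ Set.Icc (0:ℝ) A)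
    (u : Fin n → ℝ) (hu : ∑ i, (u i) ^ 2 = 1)
    (μ : ℝ) (hμ0 : 0 < μ) (hμ : μ ≤ 3 / 2) :
    (∫ y, Real.exp (μ * ∑ i, u i * (y i - x i))
        ∂(Measure.pi fun i => poissonMeasureReal (x i)))
      ≤ Real.exp (μ ^ 2 * A) := by
  have hprob : ∀ i, IsProbabilityMeasure (poissonMeasureReal (x i)) :=
    fun i => poisson_isProbabilityMeasure (hx i).1
  -- Step 1: factor the integrand and apply Fubini
  have key := by
    haveI : ∀ i, SigmaFinite (poissonMeasureReal (x i)) := fun i => by haveI := hprob i; infer_instance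
    exact MeasureTheory.integral_fin_nat_prod_eq_prod (n := n) (E := fun _ : Fin n => ℝ)
      (μ := fun i => poissonMeasureReal (x i))
      (fun i z => Real.exp (μ * u i * (z - x i)))
  have key' : (∫ y : Fin n → ℝ, ∏ i, Real.exp (μ * u i * (y i - x i))
        ∂(Measure.pi fun i => poissonMeasureReal (x i)))
      = ∏ i, ∫ z : ℝ, Real.exp (μ * u i * (z - x i)) ∂(poissonMeasureReal (x i)) := key
  have hfactor : (∫ y, Real.exp (μ * ∑ i, u i * (y i - x i))
        ∂(Measure.pi fun i => poissonMeasureReal (x i)))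
      = ∫ y : Fin n → ℝ, ∏ i, Real.exp (μ * u i * (y i - x i))
        ∂(Measure.pi fun i => poissonMeasureReal (x i)) := by
    congr 1
    funext y
    rw [Finset.mul_sum, Real.exp_sum]
    exact Finset.prod_congr rfl fun i _ => by rw [mul_assoc]
  rw [hfactor, key']
  -- Step 2: compute each factor
  have hfac : ∀ i, (∫ z : ℝ, Real.exp (μ * u i * (z - x i)) ∂(poissonMeasureReal (x i)))
      = Real.exp (x i * (Real.exp (μ * u i) - 1) - μ * u i * x i) :=
    fun i => poisson_integral_exp (x i) (hx i).1 (μ * u i) (x i)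
  simp_rw [hfac, ← Real.exp_sum]
  rw [Real.exp_le_exp]
  -- Step 3: bound the sum
  have hterm : ∀ i : Fin n, x i * (Real.exp (μ * u i) - 1) - μ * u i * x i
      ≤ A * μ ^ 2 * (u i) ^ 2 := by
    intro i
    set s := μ * u i with hs
    have hui : (u i) ^ 2 ≤ 1 := by
      rw [← hu]
      exact Finset.single_le_sum (fun j _ => sq_nonneg (u j)) (Finset.mem_univ i)
    have huabs : |u i| ≤ 1 := by
      nlinarith [sq_abs (u i), abs_nonneg (u i)]
    have hsabs : |s| ≤ 3 / 2 := by
      rw [hs, abs_mul, abs_of_pos hμ0]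
      calc μ * |u i| ≤ (3 / 2) * 1 := mul_le_mul hμ huabs (abs_nonneg _) (by norm_num)
        _ = 3 / 2 := by norm_num
    have h1 : 0 ≤ Real.exp s - 1 - s := by
      have := Real.add_one_le_exp s; linarith
    have h2 : Real.exp s - 1 - s ≤ s ^ 2 := exp_sub_one_sub_le hsabs
    have h3 : x i * (Real.exp s - 1 - s) ≤ A * s ^ 2 :=
      mul_le_mul (hx i).2 h2 h1 hA.le
    have hs2 : s ^ 2 = μ ^ 2 * (u i) ^ 2 := by rw [hs]; ring
    nlinarith [h3]
  calc (∑ i, (x i * (Real.exp (μ * u i) - 1) - μ * u i * x i))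
      ≤ ∑ i, A * μ ^ 2 * (u i) ^ 2 := Finset.sum_le_sum fun i _ => hterm i
    _ = A * μ ^ 2 * ∑ i, (u i) ^ 2 := by rw [Finset.mul_sum]
    _ = μ ^ 2 * A := by rw [hu]; ring
end
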